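/- Let f₁,…,fₙ be nonzero real numbers and let Zₙ be the tridiagonal matrix with (Zₙ)_{ii}=2fᵢ and (Zₙ)_{i,i±1}=−fᵢ. Then all eigenvalues of Zₙ are real and nonzero, the number of eigenvalues of Zₙ with positive real part equals the number of positive fᵢ, and the number with negative real part equals the number of negative fᵢ. -/

import Mathlib

open Matrix Polynomial

section Auxiliary

open Finset



lemma tridiag_sum_identity (g : ℕ → ℝ) (n : ℕ) :
    ∑ k ∈ Finset.range n, g k * (2 * g k - g (k+1) - (if k = 0 then 0 else g (k-1)))
      = (if n = 0 then 0 else g 0 ^ 2 + g (n-1) ^ 2 - g (n-1) * g n)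
        + ∑ k ∈ Finset.range (n-1), (g k - g (k+1)) ^ 2 := by
  induction n with
  | zero => simp
  | succ n ih =>
    match n with
    | 0 => simp [Finset.sum_range_succ]; ring
    | m+1 =>
      rw [Finset.sum_range_succ, ih]
      simp only [Nat.succ_ne_zero, if_false, Nat.add_sub_cancel]
      rw [Finset.sum_range_succ]
      ring

lemma sum_coe_eq {n : ℕ} (c : ℕ) (v : Fin n → ℝ) :
    ∑ j : Fin n, (if (j:ℕ) = c then v j else 0) = if h : c < n then v ⟨c, h⟩ else 0 := by
  split_ifs with h
  · rw [Finset.sum_eq_single (⟨c, h⟩ : Fin n)]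
    · simp
    · intro j _ hj
      rw [if_neg]
      simpa [Fin.ext_iff] using hj
    · simp
  · apply Finset.sum_eq_zero
    intro j _
    rw [if_neg]
    exact fun hj => h (hj ▸ j.isLt)

lemma tridiagT_posDef (n : ℕ) :
    (Matrix.of fun i j : Fin n =>
      if j = i then (2:ℝ)
      else if ((j : ℕ) = (i : ℕ) + 1 ∨ (j : ℕ) + 1 = (i : ℕ)) then -1
      else 0).PosDef := by
  set T : Matrix (Fin n) (Fin n) ℝ := Matrix.of fun i j : Fin n =>
      if j = i then (2:ℝ)
      else if ((j : ℕ) = (i : ℕ) + 1 ∨ (j : ℕ) + 1 = (i : ℕ)) then -1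
      else 0 with hT
  rw [Matrix.posDef_iff_dotProduct_mulVec]
  constructor
  · ext i j
    simp only [conjTranspose_apply, star_trivial, hT, of_apply, Fin.ext_iff]
    split_ifs <;> (first | rfl | (exfalso; omega))
  · intro x hx
    classical
    obtain ⟨g, hgdef, hgz⟩ : ∃ g : ℕ → ℝ, (∀ k (h : k < n), g k = x ⟨k, h⟩) ∧
        (∀ k, n ≤ k → g k = 0) := by
      refine ⟨fun k => if h : k < n then x ⟨k, h⟩ else 0, fun k h => dif_pos h,
        fun k h => dif_neg (by omega)⟩
    have hmv : ∀ i : Fin n, (T *ᵥ x) i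
        = 2 * g i - g ((i:ℕ)+1) - (if (i:ℕ) = 0 then 0 else g ((i:ℕ)-1)) := by
      intro i
      have expand : ∀ j : Fin n, T i j * x j
          = (if j = i then 2 * x j else 0)
            + (if (j:ℕ) = (i:ℕ)+1 then -x j else 0)
            + (if (j:ℕ)+1 = (i:ℕ) then -x j else 0) := by
        intro j
        simp only [hT, of_apply, Fin.ext_iff]
        split_ifs <;> (first | ring1 | (exfalso; omega))
      rw [mulVec, dotProduct]
      simp only [expand]
      rw [Finset.sum_add_distrib, Finset.sum_add_distrib]
      have h1 : ∑ j : Fin n, (if j = i then 2 * x j else 0) = 2 * x i := by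
        rw [Finset.sum_ite_eq' Finset.univ i (fun j => 2 * x j)]; simp
      have h2 : ∑ j : Fin n, (if (j:ℕ) = (i:ℕ)+1 then -x j else 0) = -g ((i:ℕ)+1) := by
        rw [sum_coe_eq ((i:ℕ)+1) (fun j => -x j)]
        split_ifs with h
        · rw [hgdef _ h]
        · rw [hgz _ (by omega), neg_zero]
      have h3 : ∑ j : Fin n, (if (j:ℕ)+1 = (i:ℕ) then -x j else 0)
          = -(if (i:ℕ) = 0 then 0 else g ((i:ℕ)-1)) := by
        rcases Nat.eq_zero_or_pos (i:ℕ) with h0 | h0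
        · rw [if_pos h0, Finset.sum_eq_zero, neg_zero]
          intro j _
          rw [if_neg]; omega
        · rw [if_neg (by omega)]
          have hc : ∀ j : Fin n, ((j:ℕ)+1 = (i:ℕ)) = ((j:ℕ) = (i:ℕ)-1) := by
            intro j; rw [eq_iff_iff]; omega
          simp only [hc]
          rw [sum_coe_eq ((i:ℕ)-1) (fun j => -x j)]
          have hlt : (i:ℕ)-1 < n := by omega
          rw [dif_pos hlt, hgdef _ hlt]
      rw [h1, h2, h3, hgdef _ i.isLt, Fin.eta]
      ring
    have hq : star x ⬝ᵥ (T *ᵥ x)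
        = ∑ k ∈ Finset.range n, g k * (2 * g k - g (k+1) - (if k = 0 then 0 else g (k-1))) := by
      rw [show star x = x from star_trivial x, dotProduct]
      rw [← Fin.sum_univ_eq_sum_range (fun k => g k * (2 * g k - g (k+1) - (if k = 0 then 0 else g (k-1))))]
      apply Finset.sum_congr rfl
      intro i _
      rw [hmv i, hgdef _ i.isLt, Fin.eta]
    rw [hq, tridiag_sum_identity g n]
    have hgn : g n = 0 := hgz n le_rfl
    rcases Nat.eq_zero_or_pos n with h0 | h0
    · exact absurd (_root_.funext fun i => absurd i.isLt (by omega)) hx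
    have hs : 0 ≤ ∑ k ∈ Finset.range (n-1), (g k - g (k+1)) ^ 2 :=
      Finset.sum_nonneg fun k _ => sq_nonneg _
    rw [if_neg (by omega), hgn]
    rcases lt_or_eq_of_le (by nlinarith [sq_nonneg (g 0), sq_nonneg (g (n-1))] :
      (0:ℝ) ≤ g 0 ^ 2 + g (n-1) ^ 2 - g (n-1) * 0 + ∑ k ∈ Finset.range (n-1), (g k - g (k+1)) ^ 2)
      with h | h
    · exact h
    exfalso
    have hg0 : g 0 = 0 := by nlinarith [sq_nonneg (g 0), sq_nonneg (g (n-1))]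
    have hsum0 : ∑ k ∈ Finset.range (n-1), (g k - g (k+1)) ^ 2 = 0 := by
      nlinarith [sq_nonneg (g 0), sq_nonneg (g (n-1))]
    have hstep : ∀ k, k < n - 1 → g k = g (k+1) := by
      intro k hk
      have h0' := (Finset.sum_eq_zero_iff_of_nonneg (fun k _ => sq_nonneg (g k - g (k+1)))).mp
        hsum0 k (Finset.mem_range.mpr hk)
      have := sq_eq_zero_iff.mp h0'
      linarith
    have hall : ∀ k, k < n → g k = 0 := by
      intro k
      induction k with
      | zero => intro _; exact hg0
      | succ k ih =>
        intro hk
        rw [← hstep k (by omega)]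
        exact ih (by omega)
    apply hx
    funext i
    have := hall i i.isLt
    rwa [hgdef _ i.isLt, Fin.eta] at this


lemma span_single_card {n : ℕ} (S : Finset (Fin n)) :
    Module.finrank ℝ (Submodule.span ℝ
      (Set.range fun i : S => (Pi.single (i : Fin n) 1 : Fin n → ℝ))) = S.card := by
  classical
  have hli : LinearIndependent ℝ (fun i : S => (Pi.single (i : Fin n) 1 : Fin n → ℝ)) := by
    have h2 := (Pi.basisFun ℝ (Fin n)).linearIndependent.comp
      (fun i : S => (i : Fin n)) Subtype.val_injective
    simpa [Function.comp_def, Pi.basisFun_apply] using h2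
  rw [finrank_span_eq_card hli, Fintype.card_coe]

lemma mem_span_single {n : ℕ} (S : Finset (Fin n)) (x : Fin n → ℝ)
    (hx : x ∈ Submodule.span ℝ
      (Set.range fun i : S => (Pi.single (i : Fin n) 1 : Fin n → ℝ)))
    (j : Fin n) (hj : j ∉ S) : x j = 0 := by
  classical
  induction hx using Submodule.span_induction with
  | mem v hv =>
    obtain ⟨i, rfl⟩ := hv
    refine Pi.single_eq_of_ne (fun hji : j = (i : Fin n) => hj ?_) 1
    rw [hji]; exact i.2
  | zero => rfl
  | add u v _ _ hu hv => simp [hu, hv]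
  | smul a u _ hu => simp [hu]

/-- One direction of Sylvester's law of inertia (counting version). -/
lemma inertia_le {n : ℕ} (d e : Fin n → ℝ) (C : Matrix (Fin n) (Fin n) ℝ)
    (hC : IsUnit C.det)
    (h : Matrix.diagonal e = Cᵀ * Matrix.diagonal d * C) :
    (Finset.univ.filter fun i => 0 < d i).card
      ≤ (Finset.univ.filter fun i => 0 < e i).card := by
  classical
  have hq : ∀ x : Fin n → ℝ, x ⬝ᵥ (Matrix.diagonal e) *ᵥ x
      = ∑ i, d i * (C *ᵥ x) i ^ 2 := by
    intro x
    rw [h, ← Matrix.mulVec_mulVec, ← Matrix.mulVec_mulVec, Matrix.dotProduct_mulVec x Cᵀ,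
      Matrix.vecMul_transpose, dotProduct]
    refine Finset.sum_congr rfl fun i _ => ?_
    rw [Matrix.mulVec_diagonal]
    ring
  have hqe : ∀ x : Fin n → ℝ, x ⬝ᵥ (Matrix.diagonal e) *ᵥ x = ∑ i, e i * x i ^ 2 := by
    intro x
    rw [dotProduct]
    refine Finset.sum_congr rfl fun i _ => ?_
    rw [Matrix.mulVec_diagonal]
    ring
  set P : Finset (Fin n) := Finset.univ.filter fun i => 0 < d i with hP
  set Q : Finset (Fin n) := Finset.univ.filter fun i => 0 < e i with hQ
  set R : Finset (Fin n) := Finset.univ.filter fun i => ¬ 0 < e i with hR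
  have hinv : Invertible C := C.invertibleOfIsUnitDet hC
  set E : (Fin n → ℝ) ≃ₗ[ℝ] (Fin n → ℝ) := C.toLinearEquiv' hinv with hE
  have hEapp : ∀ x, E x = C *ᵥ x := by
    intro x
    have := Matrix.toLinearEquiv'_apply C hinv
    calc E x = (E : Module.End ℝ (Fin n → ℝ)) x := rfl
    _ = Matrix.toLin' C x := by rw [this]
    _ = C *ᵥ x := by rw [Matrix.toLin'_apply]
  set V₀ : Submodule ℝ (Fin n → ℝ) :=
    Submodule.span ℝ (Set.range fun i : P => (Pi.single (i : Fin n) 1 : Fin n → ℝ)) with hV₀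
  set W : Submodule ℝ (Fin n → ℝ) :=
    Submodule.span ℝ (Set.range fun i : R => (Pi.single (i : Fin n) 1 : Fin n → ℝ)) with hW
  set V : Submodule ℝ (Fin n → ℝ) := V₀.map (E.symm : (Fin n → ℝ) →ₗ[ℝ] Fin n → ℝ) with hV
  have hVmem : ∀ x, x ∈ V ↔ E x ∈ V₀ := by
    intro x
    rw [hV, Submodule.mem_map]
    constructor
    · rintro ⟨y, hy, rfl⟩
      simpa using hy
    · intro hx
      exact ⟨E x, hx, by simp⟩
  -- positive on V
  have hVpos : ∀ x, x ∈ V → x ≠ 0 → 0 < x ⬝ᵥ (Matrix.diagonal e) *ᵥ x := by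
    intro x hx hx0
    rw [hq]
    have hy : (C *ᵥ x) ∈ V₀ := by rw [← hEapp]; exact (hVmem x).mp hx
    have hy0 : C *ᵥ x ≠ 0 := by
      intro h0
      apply hx0
      have : E x = 0 := by rw [hEapp, h0]
      simpa using congrArg E.symm this
    obtain ⟨i₀, hi₀⟩ := Function.ne_iff.mp hy0
    have hi₀P : i₀ ∈ P := by
      by_contra hc
      exact hi₀ (mem_span_single P _ hy i₀ hc)
    refine Finset.sum_pos' (fun i _ => ?_) ⟨i₀, Finset.mem_univ i₀, ?_⟩
    · by_cases hiP : i ∈ P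
      · have : 0 < d i := by simpa [hP] using hiP
        positivity
      · rw [mem_span_single P _ hy i hiP]
        simp
    · have hd : 0 < d i₀ := by simpa [hP] using hi₀P
      have : (C *ᵥ x) i₀ ≠ 0 := by simpa using hi₀
      positivity
  -- nonpositive on W
  have hWnonpos : ∀ x, x ∈ W → x ⬝ᵥ (Matrix.diagonal e) *ᵥ x ≤ 0 := by
    intro x hx
    rw [hqe]
    refine Finset.sum_nonpos fun i _ => ?_
    by_cases hiR : i ∈ R
    · have hne : ¬ 0 < e i := by simpa [hR] using hiR
      have he : e i ≤ 0 := not_lt.mp hne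
      exact mul_nonpos_iff.mpr (Or.inr ⟨he, sq_nonneg _⟩)
    · rw [mem_span_single R _ hx i hiR]
      simp
  -- V ⊓ W = ⊥
  have hdisj : V ⊓ W = ⊥ := by
    rw [Submodule.eq_bot_iff]
    intro x hx
    by_contra hx0
    exact absurd (hVpos x hx.1 hx0) (not_lt.mpr (hWnonpos x hx.2))
  have hrkV : Module.finrank ℝ V = P.card := by
    rw [hV, LinearEquiv.finrank_map_eq, span_single_card]
  have hrkW : Module.finrank ℝ W = R.card := span_single_card R
  have hsum := Submodule.finrank_sup_add_finrank_inf_eq V W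
  rw [hdisj, finrank_bot, add_zero, hrkV, hrkW] at hsum
  have hle : Module.finrank ℝ ↥(V ⊔ W) ≤ n := by
    have := Submodule.finrank_le (V ⊔ W)
    simpa using this
  have hQR : Q.card + R.card = n := by
    have := Finset.card_filter_add_card_filter_not (s := Finset.univ)
      (p := fun i : Fin n => 0 < e i)
    simpa [hQ, hR] using this
  omega


variable {m : Type*} [Fintype m] [DecidableEq m]

lemma charpoly_conj (P A : Matrix m m ℝ) (hP : IsUnit P.det) :
    (P * A * P⁻¹).charpoly = A.charpoly := by
  have hPP : P * P⁻¹ = 1 := mul_nonsing_inv P hP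
  have hmap : (P.map (C : ℝ → ℝ[X])) * (P⁻¹.map C) = 1 := by
    have := congrArg (fun M : Matrix m m ℝ => M.map (C : ℝ → ℝ[X])) hPP
    simpa [Matrix.map_mul] using this
  have hkey : charmatrix (P * A * P⁻¹) = P.map C * charmatrix A * P⁻¹.map C := by
    simp only [charmatrix, RingHom.mapMatrix_apply]
    have hcomm : ∀ M : Matrix m m ℝ[X],
        (Matrix.scalar m (X : ℝ[X])) * M = M * Matrix.scalar m (X : ℝ[X]) :=
      fun M => (scalar_commute (X : ℝ[X]) (fun r => Commute.all _ _) M).eq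
    rw [mul_sub, sub_mul]
    congr 1
    · rw [mul_assoc, hcomm, ← mul_assoc, hmap, one_mul]
    · rw [Matrix.map_mul, Matrix.map_mul]
  have hdet : (P.map (C : ℝ → ℝ[X])).det * (P⁻¹.map C).det = 1 := by
    rw [← det_mul, hmap, det_one]
  rw [Matrix.charpoly, hkey, det_mul, det_mul, Matrix.charpoly]
  ring_nf
  calc (P.map C).det * (charmatrix A).det * (P⁻¹.map C).det
      = (charmatrix A).det * ((P.map C).det * (P⁻¹.map C).det) := by ring
    _ = (charmatrix A).det := by rw [hdet, mul_one]

lemma charpoly_diagonal (d : m → ℝ) :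
    (Matrix.diagonal d).charpoly = ∏ i, (X - C (d i)) := by
  rw [Matrix.charpoly]
  have : charmatrix (Matrix.diagonal d) = Matrix.diagonal fun i => X - C (d i) := by
    ext i j
    by_cases h : i = j
    · subst h; simp
    · simp [h, Matrix.diagonal_apply_ne _ h]
  rw [this, det_diagonal]

end Auxiliary

/-- For nonzero `f i`, all eigenvalues of the tridiagonal matrix `Z` (with
`Z i i = 2 f i`, `Z i (i±1) = -f i`) are real and nonzero; the number of
eigenvalues with positive real part equals the number of positive `f i`, and
the number with negative real part equals the number of negative `f i`. -/
theorem eigenvalues_sign_count_tridiagonal (n : ℕ) (f : Fin n → ℝ)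
    (hf : ∀ i, f i ≠ 0)
    (Z : Matrix (Fin n) (Fin n) ℝ)
    (hZ : Z = Matrix.of fun i j : Fin n =>
      if j = i then 2 * f i
      else if ((j : ℕ) = (i : ℕ) + 1 ∨ (j : ℕ) + 1 = (i : ℕ)) then -f i
      else 0) :
    (∀ z ∈ ((Z.map (algebraMap ℝ ℂ)).charpoly).roots, z.im = 0 ∧ z ≠ 0) ∧
    Multiset.card ((((Z.map (algebraMap ℝ ℂ)).charpoly).roots).filter
        (fun z => 0 < z.re)) =
      (Finset.univ.filter fun i => 0 < f i).card ∧
    Multiset.card ((((Z.map (algebraMap ℝ ℂ)).charpoly).roots).filter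
        (fun z => z.re < 0)) =
      (Finset.univ.filter fun i => f i < 0).card := by
  classical
  set T : Matrix (Fin n) (Fin n) ℝ := Matrix.of fun i j : Fin n =>
      if j = i then (2:ℝ)
      else if ((j : ℕ) = (i : ℕ) + 1 ∨ (j : ℕ) + 1 = (i : ℕ)) then -1
      else 0 with hTdef
  set D : Matrix (Fin n) (Fin n) ℝ := Matrix.diagonal f with hDdef
  have hZDT : Z = D * T := by
    rw [hZ]
    ext i j
    rw [hDdef, Matrix.diagonal_mul]
    simp only [hTdef, of_apply]
    split_ifs <;> ring
  have hT : T.PosDef := tridiagT_posDef n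
  set S : Matrix (Fin n) (Fin n) ℝ := (open scoped MatrixOrder in CFC.sqrt T) with hSdef
  have hS2 : S * S = T := by
    open scoped MatrixOrder in exact CFC.sqrt_mul_sqrt_self T hT.posSemidef.nonneg
  have hSsym : Sᵀ = S := by
    have := (open scoped MatrixOrder in (CFC.sqrt_nonneg T).posSemidef).1
    rwa [Matrix.IsHermitian, conjTranspose_eq_transpose_of_trivial] at this
  have hSdet : IsUnit S.det := by
    rw [isUnit_iff_ne_zero]
    intro h0
    have : T.det = 0 := by rw [← hS2, det_mul, h0, mul_zero]
    exact absurd this (ne_of_gt hT.det_pos)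
  set A : Matrix (Fin n) (Fin n) ℝ := S * D * S with hAdef
  have hZA : A = S * Z * S⁻¹ := by
    have hstep : S * (D * (S * S)) * S⁻¹ = S * D * S := by
      calc S * (D * (S * S)) * S⁻¹ = (S * D * S) * (S * S⁻¹) := by
            simp only [Matrix.mul_assoc]
        _ = S * D * S := by rw [mul_nonsing_inv S hSdet, Matrix.mul_one]
    rw [hZDT, ← hS2, hstep]
  have hcharZA : Z.charpoly = A.charpoly := by
    rw [hZA, charpoly_conj S Z hSdet]
  have hAh : A.IsHermitian := by
    rw [Matrix.IsHermitian, conjTranspose_eq_transpose_of_trivial, hAdef,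
      Matrix.transpose_mul, Matrix.transpose_mul, hSsym, hDdef, Matrix.diagonal_transpose,
      Matrix.mul_assoc]
  set μ : Fin n → ℝ := hAh.eigenvalues with hμdef
  set U : Matrix (Fin n) (Fin n) ℝ := (hAh.eigenvectorUnitary : Matrix (Fin n) (Fin n) ℝ) with hUdef
  have hspec : A = U * Matrix.diagonal μ * star U := by
    have := hAh.spectral_theorem
    rwa [show RCLike.ofReal ∘ hAh.eigenvalues = μ by
      rw [RCLike.ofReal_real_eq_id]; rfl] at this
  have hUstar : star U * U = 1 := hAh.eigenvectorUnitary.2.1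
  have hUstar' : U * star U = 1 := hAh.eigenvectorUnitary.2.2
  have hUdet : IsUnit U.det := by
    apply IsUnit.of_mul_eq_one
    rw [← det_mul, hUstar']
    exact det_one
  have hUinv : U⁻¹ = star U := inv_eq_right_inv hUstar'
  -- charpoly A = charpoly (diagonal μ)
  have hcharAD : A.charpoly = (Matrix.diagonal μ).charpoly := by
    rw [hspec, ← hUinv, charpoly_conj U (Matrix.diagonal μ) hUdet]
  -- congruence : diagonal μ = Cᵀ * diagonal f * C with C = S * U
  set C' : Matrix (Fin n) (Fin n) ℝ := S * U with hCdef
  have hUT : star U = Uᵀ := conjTranspose_eq_transpose_of_trivial U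
  have hcong : Matrix.diagonal μ = C'ᵀ * Matrix.diagonal f * C' := by
    have h1 : star U * A * U = Matrix.diagonal μ := by
      rw [hspec]
      calc star U * (U * Matrix.diagonal μ * star U) * U
          = (star U * U) * Matrix.diagonal μ * (star U * U) := by
            simp only [Matrix.mul_assoc]
        _ = Matrix.diagonal μ := by rw [hUstar, Matrix.one_mul, Matrix.mul_one]
    rw [← h1, hAdef, hCdef, Matrix.transpose_mul, hSsym, hUT, hDdef]
    simp only [Matrix.mul_assoc]
  have hCdet : IsUnit C'.det := by
    rw [hCdef, det_mul]
    exact hSdet.mul hUdet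
  -- eigenvalues are nonzero
  have hμne : ∀ i, μ i ≠ 0 := by
    have hdet : (Matrix.diagonal μ).det ≠ 0 := by
      rw [hcong, det_mul, det_mul, det_transpose, Matrix.det_diagonal]
      have h1 : C'.det ≠ 0 := hCdet.ne_zero
      have h2 : ∏ i, f i ≠ 0 := Finset.prod_ne_zero_iff.mpr fun i _ => hf i
      exact mul_ne_zero (mul_ne_zero h1 h2) h1
    rw [Matrix.det_diagonal] at hdet
    intro i
    exact Finset.prod_ne_zero_iff.mp hdet i (Finset.mem_univ i)
  -- inertia counts
  have hcong' : Matrix.diagonal f = (C'⁻¹)ᵀ * Matrix.diagonal μ * C'⁻¹ := by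
    have hCC : C' * C'⁻¹ = 1 := mul_nonsing_inv C' hCdet
    have hCCt : (C'⁻¹)ᵀ * C'ᵀ = 1 := by
      rw [← Matrix.transpose_mul, hCC, Matrix.transpose_one]
    symm
    rw [hcong]
    calc (C'⁻¹)ᵀ * (C'ᵀ * Matrix.diagonal f * C') * C'⁻¹
        = ((C'⁻¹)ᵀ * C'ᵀ) * Matrix.diagonal f * (C' * C'⁻¹) := by
          simp only [Matrix.mul_assoc]
      _ = Matrix.diagonal f := by rw [hCCt, hCC, Matrix.one_mul, Matrix.mul_one]
  have hCinvdet : IsUnit C'⁻¹.det := C'.isUnit_nonsing_inv_det hCdet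
  have hpos : (Finset.univ.filter fun i => 0 < μ i).card
      = (Finset.univ.filter fun i => 0 < f i).card :=
    le_antisymm (inertia_le μ f C'⁻¹ hCinvdet hcong') (inertia_le f μ C' hCdet hcong)
  have hnegdiag : ∀ (g : Fin n → ℝ) (M : Matrix (Fin n) (Fin n) ℝ) (B : Matrix (Fin n) (Fin n) ℝ),
      Matrix.diagonal g = Bᵀ * M * B →
      Matrix.diagonal (fun i => -g i) = Bᵀ * (-M) * B := by
    intro g M B hgm
    have h1 : Matrix.diagonal (fun i => -g i) = -Matrix.diagonal g := by
      ext i j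
      by_cases h : i = j
      · subst h; simp
      · simp [Matrix.diagonal_apply_ne _ h]
    rw [h1, hgm, Matrix.mul_neg, Matrix.neg_mul]
  have hcongn : Matrix.diagonal (fun i => -μ i)
      = C'ᵀ * Matrix.diagonal (fun i => -f i) * C' := by
    have := hnegdiag μ (Matrix.diagonal f) C' hcong
    rwa [show -Matrix.diagonal f = Matrix.diagonal (fun i => -f i) by
      ext i j
      by_cases h : i = j
      · subst h; simp
      · simp [Matrix.diagonal_apply_ne _ h]] at this
  have hcongn' : Matrix.diagonal (fun i => -f i)
      = (C'⁻¹)ᵀ * Matrix.diagonal (fun i => -μ i) * C'⁻¹ := by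
    have := hnegdiag f (Matrix.diagonal μ) C'⁻¹ hcong'
    rwa [show -Matrix.diagonal μ = Matrix.diagonal (fun i => -μ i) by
      ext i j
      by_cases h : i = j
      · subst h; simp
      · simp [Matrix.diagonal_apply_ne _ h]] at this
  have hneg : (Finset.univ.filter fun i => 0 < -μ i).card
      = (Finset.univ.filter fun i => 0 < -f i).card :=
    le_antisymm (inertia_le (fun i => -μ i) (fun i => -f i) C'⁻¹ hCinvdet hcongn')
      (inertia_le (fun i => -f i) (fun i => -μ i) C' hCdet hcongn)
  have hfilterneg : ∀ g : Fin n → ℝ,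
      (Finset.univ.filter fun i => 0 < -g i) = (Finset.univ.filter fun i => g i < 0) := by
    intro g
    apply Finset.filter_congr
    intro i _
    rw [neg_pos]
  rw [hfilterneg, hfilterneg] at hneg
  -- compute the roots of the complex charpoly
  have hcharfinal : Z.charpoly = ∏ i, (X - C (μ i)) := by
    rw [hcharZA, hcharAD, _root_.charpoly_diagonal]
  have hmapped : (Z.map (algebraMap ℝ ℂ)).charpoly
      = ∏ i, (X - C ((μ i : ℂ))) := by
    rw [Matrix.charpoly_map, hcharfinal, Polynomial.map_prod]
    refine Finset.prod_congr rfl fun i _ => ?_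
    rw [Polynomial.map_sub, Polynomial.map_X, Polynomial.map_C]
    norm_num
  have hroots : (Z.map (algebraMap ℝ ℂ)).charpoly.roots
      = Finset.univ.val.map (fun i => (μ i : ℂ)) := by
    rw [hmapped]
    have hprod : ∏ i : Fin n, (X - C ((μ i : ℂ)))
        = ((Finset.univ.val.map (fun i => (μ i : ℂ))).map (fun a => X - C a)).prod := by
      rw [Multiset.map_map]
      rfl
    rw [hprod, Polynomial.roots_multiset_prod_X_sub_C]
  refine ⟨?_, ?_, ?_⟩
  · intro z hz
    rw [hroots] at hz
    obtain ⟨i, _, rfl⟩ := Multiset.mem_map.mp hz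
    exact ⟨Complex.ofReal_im _, Complex.ofReal_ne_zero.mpr (hμne i)⟩
  · rw [hroots, ← Multiset.countP_eq_card_filter, Multiset.countP_map]
    simp only [Complex.ofReal_re]
    rw [← hpos]
    rfl
  · rw [hroots, ← Multiset.countP_eq_card_filter, Multiset.countP_map]
    simp only [Complex.ofReal_re]
    rw [← hneg]
    rfl
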